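/- Let n ≥ 2, let p divide r, and fix any integer α with 0 ≤ α < r/p. Then the subgroup H of G(r,p,n) generated by the elements u_0, u_1, …, u_{n−2} is isomorphic to the wreath product G(r, n−1); moreover, the map sending each ((c_1,…,c_{n−1},c_n); t) ∈ H to ((c_1,…,c_{n−1}); t) ∈ G(r,n−1) is a group isomorphism. -/

import Mathlib

/-- `swapNat n j` is the adjacent transposition `s_{j+1}` (the swap of the 1-indexed
letters `j+1` and `j+2`, i.e. of the `Fin n` indices `j` and `j+1`). -/
def swapNat (n j : ℕ) : Equiv.Perm (Fin n) :=
  if h : j + 1 < n then Equiv.swap ⟨j, Nat.lt_of_succ_lt h⟩ ⟨j + 1, h⟩ else 1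

/-- `tcyc n i` is the cycle `t_i = s_i s_{i-1} ⋯ s_1 = (i+1, i, …, 1)`
(sending `i+1 ↦ i ↦ ⋯ ↦ 1 ↦ i+1`); `tcyc n 0` is the identity. -/
def tcyc (n i : ℕ) : Equiv.Perm (Fin n) :=
  ((List.range i).reverse.map (swapNat n)).prod
/-- The wreath product `G(r,n) = Z_r ≀ S_n`: pairs `((c_1,…,c_n); π)` with `c_i ∈ Z_r`,
`π ∈ S_n`. -/
@[ext]
structure WreathZ (r n : ℕ) where
  c : Fin n → ZMod r
  pi : Equiv.Perm (Fin n)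

namespace WreathZ

variable {r n : ℕ}

instance : Mul (WreathZ r n) :=
  ⟨fun x y => ⟨fun i => x.c i + y.c (x.pi⁻¹ i), x.pi * y.pi⟩⟩

instance : One (WreathZ r n) := ⟨⟨0, 1⟩⟩

instance : Inv (WreathZ r n) := ⟨fun x => ⟨fun i => -x.c (x.pi i), x.pi⁻¹⟩⟩

@[simp] lemma mul_c (x y : WreathZ r n) : (x * y).c = fun i => x.c i + y.c (x.pi⁻¹ i) := rfl
@[simp] lemma mul_pi (x y : WreathZ r n) : (x * y).pi = x.pi * y.pi := rfl
@[simp] lemma one_c : (1 : WreathZ r n).c = 0 := rfl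
@[simp] lemma one_pi : (1 : WreathZ r n).pi = 1 := rfl
@[simp] lemma inv_c (x : WreathZ r n) : x⁻¹.c = fun i => -x.c (x.pi i) := rfl
@[simp] lemma inv_pi (x : WreathZ r n) : x⁻¹.pi = x.pi⁻¹ := rfl

instance : Group (WreathZ r n) where
  mul_assoc x y z := by
    ext i
    · simp [add_assoc, Equiv.Perm.mul_apply]
    · simp [mul_assoc]
  one_mul x := by ext i <;> simp
  mul_one x := by ext i <;> simp
  inv_mul_cancel x := by
    ext i
    · simp [Equiv.Perm.mul_apply]
    · simp

end WreathZ

/-- The complex reflection group `G(r,p,n)`: the subgroup of `G(r,n)` of elements whose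
color sum is `0` modulo `p`. -/
def Grpn (r p n : ℕ) (h : p ∣ r) : Subgroup (WreathZ r n) where
  carrier := {x | ZMod.castHom h (ZMod p) (∑ i, x.c i) = 0}
  one_mem' := by simp
  mul_mem' := by
    intro a b ha hb
    simp only [Set.mem_setOf_eq, WreathZ.mul_c] at *
    rw [Finset.sum_add_distrib, map_add, ha, Equiv.sum_comp a.pi⁻¹ b.c, hb, add_zero]
  inv_mem' := by
    intro a ha
    simp only [Set.mem_setOf_eq, WreathZ.inv_c] at *
    rw [show (∑ x : Fin n, -a.c (a.pi x)) = -∑ x : Fin n, a.c (a.pi x) by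
      rw [Finset.sum_neg_distrib]]
    rw [map_neg, Equiv.sum_comp a.pi (fun i => a.c i), ha, neg_zero]

/-- The color vector `(1, 0, …, 0, a-1) ∈ Z_r^n` (first entry `1`, last entry `a-1`,
all other entries `0`). -/
def cbar (r n : ℕ) (a : ℤ) : Fin n → ZMod r := fun j =>
  (if j.val = 0 then 1 else 0) + (if j.val = n - 1 then (a : ZMod r) - 1 else 0)

/-- The elements `u_i = (c̄_i; t_i) ∈ G(r,p,n)` for `0 ≤ i ≤ n-1`, where
`c̄_i = (1, 0, …, 0, αp-1)` for `i ≤ n-2` and `c̄_{n-1} = (1, 0, …, 0, p-1)`. -/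
def uElt (r p n α i : ℕ) : WreathZ r n :=
  if i = n - 1 then ⟨cbar r n (p : ℤ), tcyc n i⟩
  else ⟨cbar r n ((α : ℤ) * (p : ℤ)), tcyc n i⟩

section Helpers

open Equiv

/-- color vector with a single `1` in position `0`. -/
def e0 (r m : ℕ) : Fin m → ZMod r := fun j => if j.val = 0 then 1 else 0

/-- the generators of the smaller wreath product. -/
def vElt (r m i : ℕ) : WreathZ r m := ⟨e0 r m, tcyc m i⟩

lemma tcyc_zero (m : ℕ) : tcyc m 0 = 1 := rfl

lemma tcyc_succ (m i : ℕ) : tcyc m (i + 1) = swapNat m i * tcyc m i := by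
  simp [tcyc, List.range_succ]

/-- projection to the permutation component. -/
def permProj (r m : ℕ) : WreathZ r m →* Equiv.Perm (Fin m) :=
  MonoidHom.mk' WreathZ.pi (fun _ _ => rfl)

/-- extension of a permutation of `Fin (k+1)` to `Fin (k+2)` fixing the last point. -/
noncomputable def extHom (k : ℕ) : Equiv.Perm (Fin k) →* Equiv.Perm (Fin (k + 1)) :=
  Equiv.Perm.viaEmbeddingHom (Fin.castSuccEmb)

lemma extHom_castSucc {k : ℕ} (π : Equiv.Perm (Fin k)) (x : Fin k) :
    extHom k π (Fin.castSucc x) = Fin.castSucc (π x) :=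
  Equiv.Perm.viaEmbedding_apply π Fin.castSuccEmb x

lemma extHom_last {k : ℕ} (π : Equiv.Perm (Fin k)) : extHom k π (Fin.last k) = Fin.last k := by
  refine Equiv.Perm.viaEmbedding_apply_of_notMem π Fin.castSuccEmb _ ?_
  rintro ⟨y, hy⟩
  exact (Fin.castSucc_lt_last y).ne hy

lemma extHom_swapNat {k : ℕ} (j : ℕ) (h : j + 1 < k) :
    extHom k (swapNat k j) = swapNat (k + 1) j := by
  have h' : j + 1 < k + 1 := Nat.lt_succ_of_lt h
  ext x
  refine Fin.lastCases ?_ (fun y => ?_) x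
  · rw [swapNat, dif_pos h, swapNat, dif_pos h', extHom_last]
    rw [Equiv.swap_apply_of_ne_of_ne]
    · intro hc
      have := congrArg Fin.val hc
      simp only [Fin.val_last] at this
      omega
    · intro hc
      have := congrArg Fin.val hc
      simp only [Fin.val_last] at this
      omega
  · rw [swapNat, dif_pos h, swapNat, dif_pos h', extHom_castSucc]
    have e1 : (⟨j, Nat.lt_of_succ_lt h'⟩ : Fin (k + 1))
        = Fin.castSucc ⟨j, Nat.lt_of_succ_lt h⟩ := by
      apply Fin.ext; simp
    have e2 : (⟨j + 1, h'⟩ : Fin (k + 1)) = Fin.castSucc ⟨j + 1, h⟩ := by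
      apply Fin.ext; simp
    rw [e1, e2, (Fin.castSucc_injective k).swap_apply]

lemma extHom_tcyc {k i : ℕ} (hi : i ≤ k) :
    extHom (k + 1) (tcyc (k + 1) i) = tcyc (k + 2) i := by
  induction i with
  | zero => rw [tcyc_zero, tcyc_zero, map_one]
  | succ m ih =>
      rw [tcyc_succ, tcyc_succ, map_mul, ih (Nat.le_of_succ_le hi),
        extHom_swapNat m (by omega)]

end Helpers

section SHom

open Equiv

/-- The section `G(r,k+1) → G(r,k+2)` as a bare function. -/
noncomputable def sFun (r a k : ℕ) (y : WreathZ r (k + 1)) : WreathZ r (k + 2) :=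
  ⟨fun j => if h : j.val < k + 1 then y.c ⟨j.val, h⟩ else ((a : ZMod r) - 1) * ∑ i, y.c i,
   extHom (k + 1) y.pi⟩

lemma sFun_c_castSucc (r a k : ℕ) (y : WreathZ r (k + 1)) (j : Fin (k + 1)) :
    (sFun r a k y).c (Fin.castSucc j) = y.c j := by
  simp [sFun]
  intro h; have := j.isLt; omega

lemma sFun_c_last (r a k : ℕ) (y : WreathZ r (k + 1)) :
    (sFun r a k y).c (Fin.last (k + 1)) = ((a : ZMod r) - 1) * ∑ i, y.c i := by
  simp [sFun]

lemma sFun_pi_castSucc (r a k : ℕ) (y : WreathZ r (k + 1)) (j : Fin (k + 1)) :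
    (sFun r a k y).pi (Fin.castSucc j) = Fin.castSucc (y.pi j) :=
  extHom_castSucc _ _

lemma sFun_pi_inv_castSucc (r a k : ℕ) (y : WreathZ r (k + 1)) (j : Fin (k + 1)) :
    (sFun r a k y).pi⁻¹ (Fin.castSucc j) = Fin.castSucc (y.pi⁻¹ j) := by
  show (extHom (k + 1) y.pi)⁻¹ _ = _
  rw [← map_inv, extHom_castSucc]

lemma sFun_pi_inv_last (r a k : ℕ) (y : WreathZ r (k + 1)) :
    (sFun r a k y).pi⁻¹ (Fin.last (k + 1)) = Fin.last (k + 1) := by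
  show (extHom (k + 1) y.pi)⁻¹ _ = _
  rw [← map_inv, extHom_last]

lemma sFun_mul (r a k : ℕ) (x y : WreathZ r (k + 1)) :
    sFun r a k (x * y) = sFun r a k x * sFun r a k y := by
  refine WreathZ.ext ?_ ?_
  · funext j
    refine Fin.lastCases ?_ (fun jj => ?_) j
    · rw [WreathZ.mul_c]
      show _ = (sFun r a k x).c (Fin.last (k+1))
          + (sFun r a k y).c ((sFun r a k x).pi⁻¹ (Fin.last (k+1)))
      rw [sFun_pi_inv_last, sFun_c_last, sFun_c_last, sFun_c_last]
      simp only [WreathZ.mul_c]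
      rw [Finset.sum_add_distrib, Equiv.sum_comp x.pi⁻¹ y.c]
      ring
    · rw [WreathZ.mul_c]
      show _ = (sFun r a k x).c (Fin.castSucc jj)
          + (sFun r a k y).c ((sFun r a k x).pi⁻¹ (Fin.castSucc jj))
      rw [sFun_pi_inv_castSucc, sFun_c_castSucc, sFun_c_castSucc, sFun_c_castSucc,
        WreathZ.mul_c]
  · exact map_mul (extHom (k + 1)) x.pi y.pi

/-- The section `G(r,k+1) → G(r,k+2)` as a monoid hom. -/
noncomputable def sHom (r a k : ℕ) : WreathZ r (k + 1) →* WreathZ r (k + 2) :=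
  MonoidHom.mk' (sFun r a k) (sFun_mul r a k)

lemma sHom_apply (r a k : ℕ) (y : WreathZ r (k + 1)) : sHom r a k y = sFun r a k y := rfl

lemma sHom_injective (r a k : ℕ) : Function.Injective (sHom r a k) := by
  rw [injective_iff_map_eq_one]
  intro y hy
  rw [sHom_apply] at hy
  refine WreathZ.ext ?_ ?_
  · funext i
    have := congrArg (fun z : WreathZ r (k + 2) => z.c (Fin.castSucc i)) hy
    simpa [sFun_c_castSucc] using this
  · show y.pi = 1
    apply Equiv.Perm.viaEmbeddingHom_injective (Fin.castSuccEmb (n := k + 1))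
    rw [map_one]
    exact congrArg WreathZ.pi hy

end SHom

section Generation

open Equiv

lemma conj_color {r m : ℕ} (g : WreathZ r m) (d : Fin m → ZMod r) :
    g * ⟨d, 1⟩ * g⁻¹ = ⟨fun j => d (g.pi⁻¹ j), 1⟩ := by
  refine WreathZ.ext ?_ ?_
  · funext j
    show (g * ⟨d, 1⟩).c j + g⁻¹.c ((g * ⟨d, 1⟩).pi⁻¹ j) = _
    simp only [WreathZ.mul_c, WreathZ.mul_pi, WreathZ.inv_c]
    show g.c j + d (g.pi⁻¹ j) + -g.c (g.pi ((g.pi * 1)⁻¹ j)) = d (g.pi⁻¹ j)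
    simp
  · simp only [WreathZ.mul_pi, WreathZ.inv_pi]
    show g.pi * 1 * g.pi⁻¹ = 1
    simp

lemma v0_pow (r m : ℕ) (t : ℕ) :
    (⟨e0 r m, 1⟩ : WreathZ r m) ^ t
      = ⟨fun i => if i.val = 0 then (t : ZMod r) else 0, 1⟩ := by
  induction t with
  | zero =>
      refine WreathZ.ext ?_ rfl
      funext i
      simp
  | succ n ih =>
      rw [pow_succ, ih]
      refine WreathZ.ext ?_ ?_
      · funext i
        show (if i.val = 0 then (n : ZMod r) else 0) + e0 r m ((1:Equiv.Perm (Fin m))⁻¹ i) = _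
        simp only [inv_one, Equiv.Perm.one_apply, e0]
        push_cast
        split <;> simp
      · show (1 : Equiv.Perm (Fin m)) * 1 = 1
        simp

end Generation

section SHomMore

lemma sHom_c_castSucc (r a k : ℕ) (y : WreathZ r (k + 1)) (j : Fin (k + 1)) :
    (sHom r a k y).c (Fin.castSucc j) = y.c j :=
  sFun_c_castSucc r a k y j

lemma sHom_pi_castSucc (r a k : ℕ) (y : WreathZ r (k + 1)) (j : Fin (k + 1)) :
    (sHom r a k y).pi (Fin.castSucc j) = Fin.castSucc (y.pi j) :=
  sFun_pi_castSucc r a k y j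

lemma sum_e0 (r k : ℕ) : (∑ i, e0 r (k + 1) i) = 1 := by
  have h : e0 r (k + 1) = fun i => if i = (0 : Fin (k + 1)) then (1 : ZMod r) else 0 := by
    funext i
    simp only [e0, Fin.ext_iff, Fin.val_zero]
  rw [h, Finset.sum_ite_eq' Finset.univ (0 : Fin (k + 1)) (fun _ => (1 : ZMod r))]
  simp

end SHomMore

section Closure

open Equiv

lemma closure_vElt_eq_top (r k : ℕ) (hr : 0 < r) :
    Subgroup.closure {x : WreathZ r (k + 1) | ∃ i ≤ k, x = vElt r (k + 1) i} = ⊤ := by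
  haveI : NeZero r := ⟨hr.ne'⟩
  set K := Subgroup.closure {x : WreathZ r (k + 1) | ∃ i ≤ k, x = vElt r (k + 1) i} with hK
  have hv : ∀ i, i ≤ k → vElt r (k + 1) i ∈ K := fun i hi =>
    Subgroup.subset_closure ⟨i, hi, rfl⟩
  have hmap : K.map (permProj r (k + 1)) = ⊤ := by
    rw [eq_top_iff,
      ← Subgroup.closure_eq_top_of_mclosure_eq_top (Equiv.Perm.mclosure_swap_castSucc_succ k),
      Subgroup.closure_le]
    rintro x ⟨i, rfl⟩
    have hsw : Equiv.swap (Fin.castSucc i) (Fin.succ i)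
        = permProj r (k + 1) (vElt r (k + 1) (i.val + 1) * (vElt r (k + 1) i.val)⁻¹) := by
      rw [map_mul, map_inv]
      show _ = tcyc (k + 1) (i.val + 1) * (tcyc (k + 1) i.val)⁻¹
      rw [tcyc_succ, mul_inv_cancel_right]
      rw [swapNat, dif_pos (by omega : i.val + 1 < k + 1)]
      congr 1
    show Equiv.swap (Fin.castSucc i) (Fin.succ i) ∈ _
    rw [hsw]
    exact Subgroup.mem_map.mpr
      ⟨_, mul_mem (hv _ i.isLt) (inv_mem (hv _ (Nat.le_of_lt i.isLt))), rfl⟩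
  have hlift : ∀ π : Equiv.Perm (Fin (k + 1)), ∃ g ∈ K, g.pi = π := by
    intro π
    have hπ : π ∈ K.map (permProj r (k + 1)) := by rw [hmap]; trivial
    obtain ⟨g, hg, hgπ⟩ := Subgroup.mem_map.mp hπ
    exact ⟨g, hg, hgπ⟩
  have hsingle : ∀ (b : ZMod r) (j0 : Fin (k + 1)),
      (⟨fun i => if i = j0 then b else 0, 1⟩ : WreathZ r (k + 1)) ∈ K := by
    intro b j0
    obtain ⟨g, hg, hgπ⟩ := hlift (Equiv.swap 0 j0)
    have hv0 : (⟨e0 r (k + 1), 1⟩ : WreathZ r (k + 1)) ∈ K := hv 0 (Nat.zero_le k)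
    have hmem := mul_mem (mul_mem hg (pow_mem hv0 b.val)) (inv_mem hg)
    rw [v0_pow, conj_color] at hmem
    have heq : (⟨fun i => if i = j0 then b else 0, 1⟩ : WreathZ r (k + 1))
        = ⟨fun j => if (g.pi⁻¹ j).val = 0 then ((b.val : ℕ) : ZMod r) else 0, 1⟩ := by
      refine WreathZ.ext ?_ rfl
      funext i
      show (if i = j0 then b else 0)
          = if (g.pi⁻¹ i).val = 0 then ((b.val : ℕ) : ZMod r) else 0
      rw [ZMod.natCast_rightInverse b, hgπ, Equiv.swap_inv]
      by_cases hi : i = j0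
      · subst hi
        simp [Equiv.swap_apply_right]
      · rw [if_neg hi]
        have hne : Equiv.swap (0 : Fin (k + 1)) j0 i ≠ 0 := by
          intro hc
          apply hi
          have h2 := congrArg (Equiv.swap (0 : Fin (k + 1)) j0) hc
          rwa [Equiv.swap_apply_self, Equiv.swap_apply_left] at h2
        rw [if_neg (fun hc => hne (Fin.ext (by simpa using hc)))]
    rw [heq]
    exact hmem
  have hcolor : ∀ c : Fin (k + 1) → ZMod r, (⟨c, 1⟩ : WreathZ r (k + 1)) ∈ K := by
    have main : ∀ s : Finset (Fin (k + 1)), ∀ c : Fin (k + 1) → ZMod r,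
        (∀ i ∉ s, c i = 0) → (⟨c, 1⟩ : WreathZ r (k + 1)) ∈ K := by
      intro s
      induction s using Finset.induction_on with
      | empty =>
          intro c hc
          have hc0 : c = fun _ => 0 := funext fun i => hc i (Finset.notMem_empty i)
          rw [hc0]
          exact one_mem K
      | @insert j s hj ih =>
          intro c hc
          have hdecomp : (⟨c, 1⟩ : WreathZ r (k + 1))
              = ⟨fun i => if i = j then c j else 0, 1⟩ * ⟨Function.update c j 0, 1⟩ := by
            refine WreathZ.ext ?_ ?_
            · funext i
              show c i = (if i = j then c j else 0) + Function.update c j 0 i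
              by_cases hij : i = j
              · subst hij; simp
              · simp [Function.update_of_ne hij, hij]
            · show (1 : Equiv.Perm (Fin (k + 1))) = 1 * 1
              simp
          rw [hdecomp]
          refine mul_mem (hsingle (c j) j) (ih _ fun i hi => ?_)
          by_cases hij : i = j
          · subst hij; simp
          · rw [Function.update_of_ne hij]
            exact hc i (by simp [Finset.mem_insert, hij, hi])
    intro c
    exact main Finset.univ c fun i hi => absurd (Finset.mem_univ i) hi
  rw [eq_top_iff]
  intro x _
  obtain ⟨g, hg, hgπ⟩ := hlift x.pi
  have h2 : x * g⁻¹ ∈ K := by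
    have h1 : x * g⁻¹ = ⟨(x * g⁻¹).c, 1⟩ := by
      refine WreathZ.ext rfl ?_
      show x.pi * g.pi⁻¹ = 1
      simp [hgπ]
    rw [h1]
    exact hcolor _
  have h3 := mul_mem h2 hg
  rwa [inv_mul_cancel_right] at h3

end Closure

/-- Let `n ≥ 2`, `p ∣ r` and `0 ≤ α < r/p`. The subgroup `H` of
`G(r,p,n)` generated by `u_0, …, u_{n-2}` is isomorphic to the wreath product `G(r,n-1)`,
via the map sending `((c_1,…,c_{n-1},c_n); t) ∈ H` to `((c_1,…,c_{n-1}); t)` (which in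
particular preserves the action of the `S_n`-component on the first `n-1` letters). -/
theorem subgroup_closure_u_mulEquiv_wreath (r p n α : ℕ) (hr : 0 < r) (hp : p ∣ r)
    (hn : 2 ≤ n) (hα : α < r / p) :
    ∃ φ : (Subgroup.closure
        {x : WreathZ r n | ∃ i : ℕ, i ≤ n - 2 ∧ x = uElt r p n α i ∧ i ≠ n - 1})
          ≃* WreathZ r (n - 1),
      ∀ x, ((φ x).c = fun j : Fin (n - 1) =>
              (x : WreathZ r n).c (Fin.castLE (Nat.sub_le n 1) j)) ∧
        ∀ j : Fin (n - 1),
          (((φ x).pi) j).val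
            = (((x : WreathZ r n).pi) (Fin.castLE (Nat.sub_le n 1) j)).val := by
  obtain ⟨k, rfl⟩ : ∃ k, n = k + 2 := ⟨n - 2, by omega⟩
  haveI : NeZero r := ⟨hr.ne'⟩
  have hsv : ∀ i, i ≤ k → sHom r (α * p) k (vElt r (k + 1) i) = uElt r p (k + 2) α i := by
    intro i hi
    rw [uElt, if_neg (by omega : ¬ i = k + 2 - 1), sHom_apply]
    refine WreathZ.ext ?_ ?_
    · funext j
      refine Fin.lastCases ?_ (fun jj => ?_) j
      · rw [sFun_c_last]
        show _ = cbar r (k + 2) ((α : ℤ) * (p : ℤ)) (Fin.last (k + 1))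
        rw [cbar]
        simp only [Fin.val_last]
        rw [if_neg (by omega), if_pos (by omega),
          show (vElt r (k + 1) i).c = e0 r (k + 1) from rfl, sum_e0, mul_one, zero_add]
        push_cast
        ring
      · rw [sFun_c_castSucc]
        show e0 r (k + 1) jj = cbar r (k + 2) ((α : ℤ) * (p : ℤ)) (Fin.castSucc jj)
        rw [e0, cbar]
        simp only [Fin.coe_castSucc]
        rw [if_neg (by have := jj.isLt; omega : ¬ jj.val = k + 2 - 1), add_zero]
    · show extHom (k + 1) (tcyc (k + 1) i) = tcyc (k + 2) i
      exact extHom_tcyc hi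
  have hSet : sHom r (α * p) k '' {x : WreathZ r (k + 1) | ∃ i ≤ k, x = vElt r (k + 1) i}
      = {x : WreathZ r (k + 2) |
          ∃ i : ℕ, i ≤ k + 2 - 2 ∧ x = uElt r p (k + 2) α i ∧ i ≠ k + 2 - 1} := by
    ext x
    constructor
    · rintro ⟨y, ⟨i, hi, rfl⟩, rfl⟩
      exact ⟨i, by omega, hsv i hi, by omega⟩
    · rintro ⟨i, hi, rfl, hne⟩
      exact ⟨vElt r (k + 1) i, ⟨i, by omega, rfl⟩, hsv i (by omega)⟩
  have hrange : (sHom r (α * p) k).range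
      = Subgroup.closure {x : WreathZ r (k + 2) |
          ∃ i : ℕ, i ≤ k + 2 - 2 ∧ x = uElt r p (k + 2) α i ∧ i ≠ k + 2 - 1} := by
    rw [MonoidHom.range_eq_map, ← closure_vElt_eq_top r k hr, MonoidHom.map_closure, hSet]
  let E := MonoidHom.ofInjective (sHom_injective r (α * p) k)
  let φ := (MulEquiv.subgroupCongr hrange.symm).trans E.symm
  refine ⟨φ, fun x => ?_⟩
  have hx : sHom r (α * p) k (φ x) = (x : WreathZ r (k + 2)) := by
    show sHom r (α * p) k (E.symm (MulEquiv.subgroupCongr hrange.symm x)) = _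
    rw [MonoidHom.apply_ofInjective_symm]
    exact MulEquiv.subgroupCongr_apply _ _
  constructor
  · funext j
    have hcast : Fin.castLE (Nat.sub_le (k + 2) 1) j = Fin.castSucc j := by
      apply Fin.ext; simp
    have h : (sHom r (α * p) k (φ x)).c (Fin.castSucc j)
        = (x : WreathZ r (k + 2)).c (Fin.castSucc j) := by rw [hx]
    rw [sHom_c_castSucc] at h
    rw [hcast]
    exact h
  · intro j
    have hcast : Fin.castLE (Nat.sub_le (k + 2) 1) j = Fin.castSucc j := by
      apply Fin.ext; simp
    have h : (sHom r (α * p) k (φ x)).pi (Fin.castSucc j)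
        = (x : WreathZ r (k + 2)).pi (Fin.castSucc j) := by rw [hx]
    rw [sHom_pi_castSucc] at h
    rw [hcast, ← h, Fin.coe_castSucc]
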